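/- A nonempty set A ⊂ X is K-bounded (i.e., A ⊂ ℓ·D_X + K for some ℓ ≥ 0) if and only if rec Ã = K and Ã is hyperbolic, where Ã = cl conv(A + K). -/

import Mathlib

open Pointwise

/-- The recession cone of a set `C`. -/
def recessionCone {X : Type*} [NormedAddCommGroup X] [NormedSpace ℝ X] (C : Set X) : Set X :=
  {u : X | ∀ c ∈ C, ∀ t : ℝ, 0 ≤ t → c + t • u ∈ C}

/-- A closed convex set `C` is hyperbolic if `C ⊆ ℓ·D_X + rec C` for some `ℓ > 0`. -/
def IsHyperbolic {X : Type*} [NormedAddCommGroup X] [NormedSpace ℝ X] (C : Set X) : Prop :=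
  ∃ ℓ : ℝ, 0 < ℓ ∧ C ⊆ Metric.closedBall (0 : X) ℓ + recessionCone C

/-- `A` is K-bounded iff `rec Ã = K` and `Ã` is hyperbolic. -/
theorem bounded_iff_rec_eq_and_hyperbolic
    {X : Type*} [NormedAddCommGroup X] [NormedSpace ℝ X]
    (K : Set X) (hKcl : IsClosed K) (hKconv : Convex ℝ K)
    (hK0 : (0 : X) ∈ K)
    (hKcone : ∀ t : ℝ, 0 ≤ t → ∀ y ∈ K, t • y ∈ K)
    (A : Set X) (hA : A.Nonempty) :
    (∃ ℓ : ℝ, 0 ≤ ℓ ∧ A ⊆ Metric.closedBall (0 : X) ℓ + K) ↔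
    (recessionCone (closure (convexHull ℝ (A + K))) = K ∧
      IsHyperbolic (closure (convexHull ℝ (A + K)))) := by
  set C : Set X := closure (convexHull ℝ (A + K)) with hCdef
  -- K is closed under addition
  have hKK : ∀ a ∈ K, ∀ b ∈ K, a + b ∈ K := by
    intro a ha b hb
    have hmid : (1/2 : ℝ) • a + (1/2 : ℝ) • b ∈ K :=
      hKconv ha hb (by norm_num) (by norm_num) (by norm_num)
    have := hKcone 2 (by norm_num) _ hmid
    have h2 : (2 : ℝ) • ((1/2 : ℝ) • a + (1/2 : ℝ) • b) = a + b := by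
      rw [smul_add, smul_smul, smul_smul]; norm_num
    rwa [h2] at this
  -- A ⊆ C
  have hAC : A ⊆ C := by
    intro a ha
    have : a ∈ A + K := by
      rw [Set.mem_add]; exact ⟨a, ha, 0, hK0, add_zero a⟩
    exact subset_closure (subset_convexHull ℝ _ this)
  -- C + K ⊆ C
  have hCK : ∀ c ∈ C, ∀ k ∈ K, c + k ∈ C := by
    intro c hc k hk
    have hstep : ∀ x ∈ convexHull ℝ (A + K), x + k ∈ convexHull ℝ (A + K) := by
      intro x hx
      have h1 : x + k ∈ convexHull ℝ (A + K) + convexHull ℝ ({k} : Set X) := by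
        rw [Set.mem_add]
        exact ⟨x, hx, k, subset_convexHull ℝ _ rfl, rfl⟩
      rw [← convexHull_add] at h1
      refine convexHull_mono ?_ h1
      intro y hy
      rw [Set.mem_add] at hy ⊢
      obtain ⟨z, hz, k', hk', rfl⟩ := hy
      rw [Set.mem_add] at hz
      obtain ⟨a, ha, k₂, hk₂, rfl⟩ := hz
      rw [Set.mem_singleton_iff] at hk'
      subst hk'
      exact ⟨a, ha, k₂ + k', hKK _ hk₂ _ hk, by abel⟩
    exact map_mem_closure (f := (· + k)) (continuous_add_right k) hc hstep
  -- K ⊆ rec C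
  have hKrec : K ⊆ recessionCone C := by
    intro u hu c hc t ht
    exact hCK c hc _ (hKcone t ht u hu)
  constructor
  · rintro ⟨ℓ, hℓ, hsub⟩
    -- conv(A+K) ⊆ B(0,ℓ) + K, hence C ⊆ closure (B(0,ℓ) + K)
    have hconv : convexHull ℝ (A + K) ⊆ Metric.closedBall (0 : X) ℓ + K := by
      apply convexHull_min _ ((convex_closedBall _ _).add hKconv)
      intro x hx
      rw [Set.mem_add] at hx
      obtain ⟨a, ha, k, hk, rfl⟩ := hx
      obtain ⟨d, hd, k', hk', rfl⟩ := Set.mem_add.mp (hsub ha)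
      exact Set.mem_add.mpr ⟨d, hd, k' + k, hKK _ hk' _ hk, by abel⟩
    have hCsub : C ⊆ closure (Metric.closedBall (0 : X) ℓ + K) :=
      closure_mono hconv
    -- rec C ⊆ K
    have hrecK : recessionCone C ⊆ K := by
      intro u hu
      obtain ⟨a, ha⟩ := hA
      have hclos : u ∈ closure K := by
        rw [Metric.mem_closure_iff]
        intro ε hε
        obtain ⟨n, hn⟩ := exists_nat_gt ((‖a‖ + ℓ + 1) / ε)
        set t : ℝ := (n : ℝ) + 1 with htdef
        have ht0 : 0 < t := by positivity
        have htlarge : (‖a‖ + ℓ + 1) / ε < t := by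
          calc (‖a‖ + ℓ + 1) / ε < (n : ℝ) := hn
          _ < t := by simp [htdef]
        have hmem : a + t • u ∈ closure (Metric.closedBall (0 : X) ℓ + K) :=
          hCsub (hu a (hAC ha) t ht0.le)
        rw [Metric.mem_closure_iff] at hmem
        obtain ⟨y, hy, hdy⟩ := hmem 1 one_pos
        obtain ⟨d, hd, k, hk, rfl⟩ := Set.mem_add.mp hy
        rw [mem_closedBall_zero_iff] at hd
        refine ⟨(1/t) • k, hKcone _ (by positivity) _ hk, ?_⟩
        have hkeq : (1/t) • k - u = (1/t) • (k - t • u) := by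
          rw [smul_sub, smul_smul]
          field_simp
          rw [one_smul]
        have hbound : ‖k - t • u‖ ≤ ‖a‖ + ℓ + 1 := by
          have : k - t • u = (d + k - (a + t • u)) + a - d := by abel
          rw [this]
          calc ‖d + k - (a + t • u) + a - d‖ ≤ ‖d + k - (a + t • u) + a‖ + ‖d‖ :=
                norm_sub_le _ _
          _ ≤ ‖d + k - (a + t • u)‖ + ‖a‖ + ‖d‖ := by
                gcongr; exact norm_add_le _ _
          _ ≤ 1 + ‖a‖ + ℓ := by
                have h1 : ‖d + k - (a + t • u)‖ ≤ 1 := by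
                  rw [← dist_eq_norm, dist_comm]
                  exact hdy.le
                gcongr
          _ = ‖a‖ + ℓ + 1 := by ring
        rw [dist_comm, dist_eq_norm, hkeq, norm_smul]
        have h1t : ‖(1/t : ℝ)‖ = 1/t := by
          rw [Real.norm_eq_abs, abs_of_pos (by positivity)]
        rw [h1t]
        calc (1/t) * ‖k - t • u‖ ≤ (1/t) * (‖a‖ + ℓ + 1) := by
              gcongr
        _ < ε := by
              rw [div_mul_eq_mul_div, one_mul, div_lt_iff₀ ht0]
              rw [div_lt_iff₀ hε] at htlarge
              linarith
      rwa [hKcl.closure_eq] at hclos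
    have hrec : recessionCone C = K := Set.Subset.antisymm hrecK hKrec
    refine ⟨hrec, ℓ + 1, by positivity, ?_⟩
    rw [hrec]
    intro x hx
    have hx' := hCsub hx
    rw [Metric.mem_closure_iff] at hx'
    obtain ⟨y, hy, hxy⟩ := hx' 1 one_pos
    obtain ⟨d, hd, k, hk, rfl⟩ := Set.mem_add.mp hy
    rw [mem_closedBall_zero_iff] at hd
    refine Set.mem_add.mpr ⟨x - (d + k) + d, ?_, k, hk, by abel⟩
    rw [mem_closedBall_zero_iff]
    calc ‖x - (d + k) + d‖ ≤ ‖x - (d + k)‖ + ‖d‖ := norm_add_le _ _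
    _ ≤ 1 + ℓ := by
          have : ‖x - (d + k)‖ ≤ 1 := by rw [← dist_eq_norm]; exact hxy.le
          gcongr
    _ = ℓ + 1 := by ring
  · rintro ⟨hrec, ℓ, hℓ, hsub⟩
    refine ⟨ℓ, hℓ.le, ?_⟩
    intro a ha
    have := hsub (hAC ha)
    rwa [hrec] at this
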